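/- Let G be a path graph with n vertices and let A ⊆ V(G) have k connected components. Then A is reconfigurable under the component sliding rule CS to the left-most subset L with h_L = h_A, namely the unique subset whose connected components have the same left-to-right size sequence as A and are packed as far left as possible (the components occupy positions 1 through |A| + k − 1 with exactly one empty vertex between consecutive components). -/

import Mathlib

open scoped Classical

noncomputable section

/-- `U` induces a connected subgraph of `G`. -/
def IsConnSub {V : Type*} (G : SimpleGraph V) (U : Finset V) : Prop :=
  (G.induce (U : Set V)).Connected

/-- The set of connected components of a vertex subset `U`:
maximal subsets of `U` inducing connected subgraphs. -/
def comps {V : Type*} [Fintype V] [DecidableEq V] (G : SimpleGraph V) (U : Finset V) :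
    Finset (Finset V) :=
  Finset.univ.filter (fun C => C ⊆ U ∧ IsConnSub G C ∧
    ∀ D : Finset V, C ⊆ D → D ⊆ U → IsConnSub G D → D = C)

/-- The CC-multiset of `U`: the multiset of sizes of connected components of `U`. -/
def ccMultiset {V : Type*} [Fintype V] [DecidableEq V] (G : SimpleGraph V) (U : Finset V) :
    Multiset ℕ :=
  (comps G U).val.map Finset.card

/-- Adjacency under component jumping (CJ). -/
def adjCJ {V : Type*} [Fintype V] [DecidableEq V] (G : SimpleGraph V) (U U' : Finset V) : Prop :=
  ccMultiset G U = ccMultiset G U' ∧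
  (comps G U \ comps G U').card = 1 ∧ (comps G U' \ comps G U).card = 1

/-- Adjacency under component sliding (CS). -/
def adjCS {V : Type*} [Fintype V] [DecidableEq V] (G : SimpleGraph V) (U U' : Finset V) : Prop :=
  adjCJ G U U' ∧
  ∀ C ∈ comps G U \ comps G U', ∀ C' ∈ comps G U' \ comps G U, IsConnSub G (C ∪ C')

/-- Adjacency under CS1 (component sliding by one vertex). -/
def adjCS1 {V : Type*} [Fintype V] [DecidableEq V] (G : SimpleGraph V) (U U' : Finset V) : Prop :=
  adjCS G U U' ∧
  ∀ C ∈ comps G U \ comps G U', ∀ C' ∈ comps G U' \ comps G U,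
    (C \ C').card = 1 ∧ (C' \ C).card = 1

/-- Adjacency under token jumping (TJ). -/
def adjTJ {V : Type*} [DecidableEq V] (G : SimpleGraph V) (U U' : Finset V) : Prop :=
  (U \ U').card = 1 ∧ (U' \ U).card = 1

/-- `A` and `B` are reconfigurable under rule `R` keeping the CC-multiset equal to `M`. -/
def Reconf {V : Type*} [Fintype V] [DecidableEq V] (G : SimpleGraph V) (M : Multiset ℕ)
    (R : Finset V → Finset V → Prop) (A B : Finset V) : Prop :=
  ∃ (ℓ : ℕ) (W : ℕ → Finset V), W 0 = A ∧ W ℓ = B ∧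
    (∀ i ≤ ℓ, ccMultiset G (W i) = M) ∧ ∀ i < ℓ, R (W i) (W (i + 1))

end

/-- `h_U`: the sequence of sizes of connected components of `U` along the path,
listed in left-to-right order (ordering components by their minimum vertex). -/
noncomputable def hseq (n : ℕ) (U : Finset (Fin n)) : List ℕ :=
  (((comps (SimpleGraph.pathGraph n) U).image (fun C => C.min)).sort (· ≤ ·)).map
    (fun m => ((comps (SimpleGraph.pathGraph n) U).filter (fun C => C.min = m)).sup Finset.card)

/-- The left-most subset of the path realizing the size sequence `h`: the `j`-th
component occupies the `h[j]` consecutive positions starting at `(h.take j).sum + j`,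
so that components are packed as far left as possible with exactly one empty vertex
between consecutive components. -/
def leftmost (n : ℕ) (h : List ℕ) : Finset (Fin n) :=
  Finset.univ.filter (fun v =>
    ∃ j < h.length, (h.take j).sum + j ≤ v.val ∧ v.val < (h.take j).sum + j + h.getD j 0)

namespace Stmt4

variable {n : ℕ}

/-- The interval `[a,b]` as a `Finset (Fin n)`. -/
def ival (n a b : ℕ) : Finset (Fin n) :=
  Finset.univ.filter (fun v => a ≤ v.val ∧ v.val ≤ b)

lemma mem_ival {a b : ℕ} {v : Fin n} : v ∈ ival n a b ↔ a ≤ v.val ∧ v.val ≤ b := by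
  simp [ival]

lemma ival_nonempty {a b : ℕ} (hab : a ≤ b) (hb : b < n) : (ival n a b).Nonempty :=
  ⟨⟨a, lt_of_le_of_lt hab hb⟩, mem_ival.2 ⟨le_rfl, hab⟩⟩

lemma walk_lt {U : Finset (Fin n)} {w : Fin n} (hw : w ∉ U)
    {x y : ((U : Set (Fin n)))}
    (p : ((SimpleGraph.pathGraph n).induce (U : Set (Fin n))).Walk x y)
    (hx : (x : Fin n).val < w.val) : (y : Fin n).val < w.val := by
  induction p with
  | nil => exact hx
  | @cons u v z h _ ih =>
    apply ih
    have hadj : (SimpleGraph.pathGraph n).Adj u v := h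
    rw [SimpleGraph.pathGraph_adj] at hadj
    have hv : (v : Fin n) ∈ U := v.2
    have hne : (v : Fin n).val ≠ w.val := by
      intro hh
      exact hw (by rwa [show (v : Fin n) = w from Fin.ext hh] at hv)
    omega

lemma isConnSub_iff {U : Finset (Fin n)} :
    IsConnSub (SimpleGraph.pathGraph n) U ↔
      U.Nonempty ∧ ∀ u ∈ U, ∀ v ∈ U, ∀ w : Fin n, u.val ≤ w.val → w.val ≤ v.val → w ∈ U := by
  constructor
  · intro hc
    have hpre := hc.preconnected
    have hUne : U.Nonempty := by
      obtain ⟨x⟩ := hc.nonempty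
      exact ⟨x.1, x.2⟩
    refine ⟨hUne, ?_⟩
    intro u hu v hv w huw hwv
    by_contra hw
    obtain ⟨p⟩ := hpre ⟨u, hu⟩ ⟨v, hv⟩
    have hx : (u : Fin n).val < w.val := by
      rcases lt_or_eq_of_le huw with h | h
      · exact h
      · exact absurd (by rwa [show u = w from Fin.ext h] at hu) hw
    have hlt := walk_lt hw p hx
    simp only at hlt
    omega
  · rintro ⟨hne, hint⟩
    have key : ∀ d : ℕ, ∀ u v : Fin n, ∀ hu : u ∈ U, ∀ hv : v ∈ U, v.val = u.val + d →
        ((SimpleGraph.pathGraph n).induce (U : Set (Fin n))).Reachable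
          ⟨u, by exact hu⟩ ⟨v, by exact hv⟩ := by
      intro d
      induction d with
      | zero =>
        intro u v hu hv hd
        have : u = v := Fin.ext (by omega)
        subst this
        rfl
      | succ d ih =>
        intro u v hu hv hd
        have hu1n : u.val + 1 < n := by omega
        set u' : Fin n := ⟨u.val + 1, hu1n⟩ with hu'
        have hu' : u' ∈ U := hint u hu v hv u' (by simp [hu']) (by simp [hu']; omega)
        have hadj : ((SimpleGraph.pathGraph n).induce (U : Set (Fin n))).Adj
            ⟨u, by exact hu⟩ ⟨u', by exact hu'⟩ := by
          refine SimpleGraph.pathGraph_adj.2 ?_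
          left; rfl
        exact hadj.reachable.trans (ih u' v hu' hv (by show v.val = u.val + 1 + d; omega))
    show SimpleGraph.Connected _
    haveI : Nonempty (U : Set (Fin n)) := ⟨⟨hne.choose, hne.choose_spec⟩⟩
    refine SimpleGraph.Connected.mk ?_
    · rintro ⟨x, hx⟩ ⟨y, hy⟩
      have hx' : x ∈ U := hx
      have hy' : y ∈ U := hy
      rcases le_total x.val y.val with h | h
      · exact key (y.val - x.val) x y hx' hy' (by omega)
      · exact (key (x.val - y.val) y x hy' hx' (by omega)).symm

end Stmt4
namespace Stmt4

lemma isConnSub_ival {n a b : ℕ} (hab : a ≤ b) (hb : b < n) :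
    IsConnSub (SimpleGraph.pathGraph n) (ival n a b) := by
  rw [isConnSub_iff]
  refine ⟨ival_nonempty hab hb, ?_⟩
  intro u hu v hv w huw hwv
  rw [mem_ival] at *
  omega

lemma ival_inj {n a b a' b' : ℕ} (hab : a ≤ b) (hb : b < n) (hab' : a' ≤ b') (hb' : b' < n)
    (h : ival n a b = ival n a' b') : a = a' ∧ b = b' := by
  have h1 : (⟨a, by omega⟩ : Fin n) ∈ ival n a' b' := h ▸ mem_ival.2 ⟨le_rfl, hab⟩
  have h2 : (⟨b, by omega⟩ : Fin n) ∈ ival n a' b' := h ▸ mem_ival.2 ⟨hab, le_rfl⟩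
  have h3 : (⟨a', by omega⟩ : Fin n) ∈ ival n a b := h ▸ mem_ival.2 ⟨le_rfl, hab'⟩
  have h4 : (⟨b', by omega⟩ : Fin n) ∈ ival n a b := h ▸ mem_ival.2 ⟨hab', le_rfl⟩
  rw [mem_ival] at h1 h2 h3 h4
  simp only at h1 h2 h3 h4
  omega

lemma card_ival {n a b : ℕ} (hab : a ≤ b) (hb : b < n) :
    (ival n a b).card = b + 1 - a := by
  have himg : (ival n a b).image Fin.val = Finset.Icc a b := by
    ext x
    simp only [Finset.mem_image, Finset.mem_Icc]
    constructor
    · rintro ⟨v, hv, rfl⟩; exact mem_ival.1 hv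
    · rintro ⟨h1, h2⟩
      exact ⟨⟨x, by omega⟩, mem_ival.2 ⟨h1, h2⟩, rfl⟩
  have := Finset.card_image_of_injective (ival n a b) (Fin.val_injective)
  rw [himg] at this
  rw [← this, Nat.card_Icc]

lemma min_ival {n a b : ℕ} (hab : a ≤ b) (hb : b < n) :
    (ival n a b).min = ((⟨a, by omega⟩ : Fin n) : WithTop (Fin n)) := by
  refine le_antisymm (Finset.min_le (mem_ival.2 ⟨le_rfl, hab⟩)) ?_
  apply Finset.le_min
  intro y hy
  have h1 := (mem_ival.1 hy).1
  exact_mod_cast (show (⟨a, by omega⟩ : Fin n) ≤ y from h1)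

lemma mem_comps_iff {n : ℕ} {U C : Finset (Fin n)} :
    C ∈ comps (SimpleGraph.pathGraph n) U ↔
      ∃ a b : ℕ, a ≤ b ∧ b < n ∧ C = ival n a b ∧ C ⊆ U ∧
        (∀ v ∈ U, v.val + 1 ≠ a) ∧ (∀ v ∈ U, v.val ≠ b + 1) := by
  constructor
  · intro hC
    rw [comps, Finset.mem_filter] at hC
    obtain ⟨-, hCU, hconn, hmax⟩ := hC
    obtain ⟨hne, hint⟩ := isConnSub_iff.1 hconn
    set a := (C.min' hne).val with ha
    set b := (C.max' hne).val with hb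
    have hab : a ≤ b := C.min'_le _ (C.max'_mem hne)
    have hbn : b < n := (C.max' hne).isLt
    have hCi : C = ival n a b := by
      ext v
      rw [mem_ival]
      constructor
      · intro hv; exact ⟨C.min'_le v hv, C.le_max' v hv⟩
      · rintro ⟨h1, h2⟩
        exact hint _ (C.min'_mem hne) _ (C.max'_mem hne) v h1 h2
    refine ⟨a, b, hab, hbn, hCi, hCU, ?_, ?_⟩
    · intro v hv hva
      have hD : insert v C = ival n v.val b := by
        ext w
        simp only [Finset.mem_insert, hCi, mem_ival]
        constructor
        · rintro (rfl | ⟨h1, h2⟩)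
          · exact ⟨le_rfl, by omega⟩
          · exact ⟨by omega, h2⟩
        · rintro ⟨h1, h2⟩
          rcases eq_or_lt_of_le h1 with h | h
          · left; exact Fin.ext h.symm
          · right; constructor <;> omega
      have hconnD : IsConnSub (SimpleGraph.pathGraph n) (insert v C) := by
        rw [hD]; exact isConnSub_ival (by omega) hbn
      have hsubD : insert v C ⊆ U := by
        intro w hw
        rcases Finset.mem_insert.1 hw with rfl | hw
        · exact hv
        · exact hCU hw
      have := hmax _ (Finset.subset_insert _ _) hsubD hconnD
      have hvC : v ∈ C := this ▸ Finset.mem_insert_self v C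
      rw [hCi, mem_ival] at hvC
      omega
    · intro v hv hvb
      have hD : insert v C = ival n a v.val := by
        ext w
        simp only [Finset.mem_insert, hCi, mem_ival]
        constructor
        · rintro (rfl | ⟨h1, h2⟩)
          · exact ⟨by omega, le_rfl⟩
          · exact ⟨h1, by omega⟩
        · rintro ⟨h1, h2⟩
          rcases eq_or_lt_of_le h2 with h | h
          · left; exact Fin.ext h
          · right; constructor <;> omega
      have hconnD : IsConnSub (SimpleGraph.pathGraph n) (insert v C) := by
        rw [hD]; exact isConnSub_ival (by omega) v.isLt
      have hsubD : insert v C ⊆ U := by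
        intro w hw
        rcases Finset.mem_insert.1 hw with rfl | hw
        · exact hv
        · exact hCU hw
      have := hmax _ (Finset.subset_insert _ _) hsubD hconnD
      have hvC : v ∈ C := this ▸ Finset.mem_insert_self v C
      rw [hCi, mem_ival] at hvC
      omega
  · rintro ⟨a, b, hab, hbn, rfl, hsub, hl, hr⟩
    rw [comps, Finset.mem_filter]
    refine ⟨Finset.mem_univ _, hsub, isConnSub_ival hab hbn, ?_⟩
    intro D hCD hDU hconnD
    obtain ⟨hDne, hDint⟩ := isConnSub_iff.1 hconnD
    refine Finset.Subset.antisymm ?_ hCD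
    intro d hd
    have haD : (⟨a, by omega⟩ : Fin n) ∈ D := hCD (mem_ival.2 ⟨le_rfl, hab⟩)
    have hbD : (⟨b, by omega⟩ : Fin n) ∈ D := hCD (mem_ival.2 ⟨hab, le_rfl⟩)
    rw [mem_ival]
    constructor
    · by_contra hda
      push_neg at hda
      have ha1 : 0 < a := by omega
      have hw : (⟨a - 1, by omega⟩ : Fin n) ∈ D :=
        hDint d hd _ haD ⟨a - 1, by omega⟩ (by simp only [Fin.val_mk]; omega) (by simp only [Fin.val_mk]; omega)
      exact hl _ (hDU hw) (by simp; omega)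
    · by_contra hdb
      push_neg at hdb
      have hb1 : b + 1 < n := by have := d.isLt; omega
      have hw : (⟨b + 1, hb1⟩ : Fin n) ∈ D :=
        hDint _ hbD d hd ⟨b + 1, hb1⟩ (by simp only [Fin.val_mk]; omega) (by simp only [Fin.val_mk]; omega)
      exact hr _ (hDU hw) rfl

end Stmt4
namespace Stmt4

/-- start of `i`-th interval -/
def st (l : List (ℕ × ℕ)) (i : ℕ) : ℕ := (l.getD i (0,0)).1
/-- end of `i`-th interval -/
def en (l : List (ℕ × ℕ)) (i : ℕ) : ℕ := (l.getD i (0,0)).2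

def Valid (n : ℕ) (l : List (ℕ × ℕ)) : Prop :=
  (∀ i < l.length, st l i ≤ en l i ∧ en l i < n) ∧
  (∀ i, i + 1 < l.length → en l i + 2 ≤ st l (i + 1))

def toSet (n : ℕ) (l : List (ℕ × ℕ)) : Finset (Fin n) :=
  Finset.univ.filter (fun v => ∃ i < l.length, st l i ≤ v.val ∧ v.val ≤ en l i)

lemma mem_toSet {n : ℕ} {l : List (ℕ × ℕ)} {v : Fin n} :
    v ∈ toSet n l ↔ ∃ i < l.length, st l i ≤ v.val ∧ v.val ≤ en l i := by
  simp [toSet]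

lemma valid_mono {n : ℕ} {l : List (ℕ × ℕ)} (h : Valid n l) :
    ∀ i j, i < j → j < l.length → en l i + 2 ≤ st l j := by
  intro i j hij hj
  induction j with
  | zero => omega
  | succ j ih =>
    rcases Nat.lt_or_ge i j with h' | h'
    · have h1 := ih (by omega) (by omega)
      have h2 := (h.1 j (by omega)).1
      have h3 := h.2 j hj
      omega
    · have : i = j := by omega
      subst this
      exact h.2 i hj

lemma valid_st_lt {n : ℕ} {l : List (ℕ × ℕ)} (h : Valid n l) {i j : ℕ}
    (hij : i < j) (hj : j < l.length) : st l i < st l j := by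
  have h1 := valid_mono h i j hij hj
  have h2 := (h.1 i (by omega)).1
  omega

lemma comps_toSet {n : ℕ} {l : List (ℕ × ℕ)} (hval : Valid n l) {C : Finset (Fin n)} :
    C ∈ comps (SimpleGraph.pathGraph n) (toSet n l) ↔
      ∃ i < l.length, C = ival n (st l i) (en l i) := by
  rw [mem_comps_iff]
  constructor
  · rintro ⟨a, b, hab, hbn, rfl, hsub, hl, hr⟩
    have haT : (⟨a, by omega⟩ : Fin n) ∈ toSet n l := hsub (mem_ival.2 ⟨le_rfl, hab⟩)
    obtain ⟨i, hi, h1, h2⟩ := mem_toSet.1 haT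
    simp only [Fin.val_mk] at h1 h2
    have hst : st l i = a := by
      by_contra hne
      have ha1 : 0 < a := by omega
      have hmem : (⟨a - 1, by omega⟩ : Fin n) ∈ toSet n l :=
        mem_toSet.2 ⟨i, hi, by simp only [Fin.val_mk]; omega, by simp only [Fin.val_mk]; omega⟩
      exact hl _ hmem (by simp only [Fin.val_mk]; omega)
    have hen1 : b ≤ en l i := by
      by_contra hlt
      push_neg at hlt
      have hmem : (⟨en l i + 1, by omega⟩ : Fin n) ∈ toSet n l :=
        hsub (mem_ival.2 ⟨by simp only [Fin.val_mk]; omega, by simp only [Fin.val_mk]; omega⟩)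
      obtain ⟨i', hi', h1', h2'⟩ := mem_toSet.1 hmem
      simp only [Fin.val_mk] at h1' h2'
      rcases lt_trichotomy i' i with hc | rfl | hc
      · have := valid_mono hval i' i hc hi
        omega
      · omega
      · have := valid_mono hval i i' hc hi'
        omega
    have hen : en l i = b := by
      by_contra hne
      have hmem : (⟨b + 1, by have := (hval.1 i hi).2; omega⟩ : Fin n) ∈ toSet n l :=
        mem_toSet.2 ⟨i, hi, by simp only [Fin.val_mk]; omega, by simp only [Fin.val_mk]; omega⟩
      exact hr _ hmem (by simp only [Fin.val_mk])
    exact ⟨i, hi, by rw [hst, hen]⟩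
  · rintro ⟨i, hi, rfl⟩
    have hse := hval.1 i hi
    refine ⟨st l i, en l i, hse.1, hse.2, rfl, ?_, ?_, ?_⟩
    · intro v hv
      exact mem_toSet.2 ⟨i, hi, (mem_ival.1 hv).1, (mem_ival.1 hv).2⟩
    · intro v hv hva
      obtain ⟨i', hi', h1, h2⟩ := mem_toSet.1 hv
      rcases lt_trichotomy i' i with hc | rfl | hc
      · have := valid_mono hval i' i hc hi
        omega
      · omega
      · have := valid_mono hval i i' hc hi'
        omega
    · intro v hv hvb
      obtain ⟨i', hi', h1, h2⟩ := mem_toSet.1 hv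
      rcases lt_trichotomy i' i with hc | rfl | hc
      · have h3 := valid_mono hval i' i hc hi
        have h4 := (hval.1 i' (by omega)).1
        omega
      · omega
      · have := valid_mono hval i i' hc hi'
        omega

lemma comps_toSet_eq {n : ℕ} {l : List (ℕ × ℕ)} (hval : Valid n l) :
    comps (SimpleGraph.pathGraph n) (toSet n l) =
      (Finset.range l.length).image (fun i => ival n (st l i) (en l i)) := by
  ext C
  rw [comps_toSet hval]
  simp only [Finset.mem_image, Finset.mem_range]
  constructor
  · rintro ⟨i, hi, rfl⟩; exact ⟨i, hi, rfl⟩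
  · rintro ⟨i, hi, rfl⟩; exact ⟨i, hi, rfl⟩

lemma ival_injOn {n : ℕ} {l : List (ℕ × ℕ)} (hval : Valid n l) :
    Set.InjOn (fun i => ival n (st l i) (en l i)) (Finset.range l.length) := by
  intro i hi j hj hij
  simp only [Finset.coe_range, Set.mem_Iio] at hi hj
  by_contra hne
  rcases Nat.lt_or_ge i j with hc | hc
  · have := (ival_inj (hval.1 i hi).1 (hval.1 i hi).2 (hval.1 j hj).1 (hval.1 j hj).2 hij).1
    have := valid_st_lt hval hc hj
    omega
  · have hc' : j < i := by omega
    have := (ival_inj (hval.1 i hi).1 (hval.1 i hi).2 (hval.1 j hj).1 (hval.1 j hj).2 hij).1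
    have := valid_st_lt hval hc' hi
    omega

lemma ccMultiset_toSet {n : ℕ} {l : List (ℕ × ℕ)} (hval : Valid n l) :
    ccMultiset (SimpleGraph.pathGraph n) (toSet n l) =
      (Multiset.range l.length).map (fun i => en l i + 1 - st l i) := by
  rw [ccMultiset, comps_toSet_eq hval, Finset.image_val_of_injOn (ival_injOn hval)]
  rw [Multiset.map_map]
  rw [Finset.range_val]
  apply Multiset.map_congr rfl
  intro i hi
  rw [Multiset.mem_range] at hi
  exact card_ival (hval.1 i hi).1 (hval.1 i hi).2

end Stmt4
namespace Stmt4

lemma hseq_toSet {n : ℕ} {l : List (ℕ × ℕ)} (hval : Valid n l) :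
    hseq n (toSet n l) = (List.range l.length).map (fun i => en l i + 1 - st l i) := by
  classical
  set g : ℕ → WithTop (Fin n) := fun i => (ival n (st l i) (en l i)).min with hg
  have hgval : ∀ i, ∀ hi : i < l.length, g i =
      ((⟨st l i, lt_of_le_of_lt (hval.1 i hi).1 (hval.1 i hi).2⟩ : Fin n) : WithTop (Fin n)) := by
    intro i hi
    exact min_ival (hval.1 i hi).1 (hval.1 i hi).2
  have hglt : ∀ i j, i < l.length → j < l.length → i < j → g i < g j := by
    intro i j hi hj hij
    rw [hgval i hi, hgval j hj]
    rw [WithTop.coe_lt_coe]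
    exact valid_st_lt hval hij hj
  set L : List (WithTop (Fin n)) := (List.range l.length).map g with hL
  have hpair : L.Pairwise (· < ·) := by
    rw [hL, List.pairwise_map]
    apply List.Pairwise.imp_of_mem (R := (· < ·))
    · intro a b ha hb hab
      exact hglt a b (List.mem_range.1 ha) (List.mem_range.1 hb) hab
    · exact List.pairwise_lt_range
  have himg : (comps (SimpleGraph.pathGraph n) (toSet n l)).image (fun C => C.min)
      = L.toFinset := by
    rw [comps_toSet_eq hval, Finset.image_image]
    ext x
    simp [hL, hg]
  have hsort : (((comps (SimpleGraph.pathGraph n) (toSet n l)).image (fun C => C.min)).sort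
      (· ≤ ·)) = L := by
    rw [himg]
    exact (List.toFinset_sort _ (hpair.imp ne_of_lt)).2 (hpair.imp le_of_lt)
  rw [hseq, hsort, hL, List.map_map]
  apply List.map_congr_left
  intro i hi
  rw [List.mem_range] at hi
  simp only [Function.comp]
  have hfilter : (comps (SimpleGraph.pathGraph n) (toSet n l)).filter
      (fun C => C.min = g i) = {ival n (st l i) (en l i)} := by
    ext C
    simp only [Finset.mem_filter, Finset.mem_singleton]
    constructor
    · rintro ⟨hC, hmin⟩
      obtain ⟨j, hj, rfl⟩ := (comps_toSet hval).1 hC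
      have : g j = g i := hmin
      have hij : j = i := by
        by_contra hne
        rcases Nat.lt_or_ge j i with hc | hc
        · exact absurd this (ne_of_lt (hglt j i hj hi hc))
        · exact absurd this.symm (ne_of_lt (hglt i j hi hj (by omega)))
      rw [hij]
    · rintro rfl
      exact ⟨(comps_toSet hval).2 ⟨i, hi, rfl⟩, rfl⟩
  rw [hfilter, Finset.sup_singleton]
  exact card_ival (hval.1 i hi).1 (hval.1 i hi).2

end Stmt4
namespace Stmt4

def sizes (l : List (ℕ × ℕ)) : List ℕ := l.map (fun p => p.2 + 1 - p.1)

def psum (h : List ℕ) (j : ℕ) : ℕ := (h.take j).sum + j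

def packed (h : List ℕ) : List (ℕ × ℕ) :=
  (List.range h.length).map (fun j => (psum h j, psum h j + h.getD j 0 - 1))

@[simp] lemma length_sizes {l : List (ℕ × ℕ)} : (sizes l).length = l.length := by
  simp [sizes]

@[simp] lemma length_packed {h : List ℕ} : (packed h).length = h.length := by
  simp [packed]

lemma getD_sizes {l : List (ℕ × ℕ)} {i : ℕ} (hi : i < l.length) :
    (sizes l).getD i 0 = en l i + 1 - st l i := by
  rw [sizes, st, en, List.getD_eq_getElem _ _ (by simpa using hi),
    List.getD_eq_getElem _ _ hi, List.getElem_map]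

lemma st_packed {h : List ℕ} {j : ℕ} (hj : j < h.length) :
    st (packed h) j = psum h j := by
  rw [st, List.getD_eq_getElem _ _ (by simpa using hj)]
  simp [packed]

lemma en_packed {h : List ℕ} {j : ℕ} (hj : j < h.length) :
    en (packed h) j = psum h j + h.getD j 0 - 1 := by
  rw [en, List.getD_eq_getElem _ _ (by simpa using hj)]
  simp [packed]

lemma psum_succ {h : List ℕ} {j : ℕ} (hj : j < h.length) :
    psum h (j + 1) = psum h j + h.getD j 0 + 1 := by
  rw [psum, psum, List.sum_take_succ _ _ hj, List.getD_eq_getElem _ _ hj]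
  omega


lemma sizes_range_map {l : List (ℕ × ℕ)} :
    (List.range l.length).map (fun i => en l i + 1 - st l i) = sizes l := by
  apply List.ext_getElem
  · simp
  · intro i h1 h2
    simp only [List.getElem_map, List.getElem_range, sizes]
    rw [st, en, List.getD_eq_getElem _ _ (by simpa using h2)]

lemma sizes_pos {n : ℕ} {l : List (ℕ × ℕ)} (hval : Valid n l) :
    ∀ x ∈ sizes l, 1 ≤ x := by
  intro x hx
  rw [sizes, List.mem_map] at hx
  obtain ⟨p, hp, rfl⟩ := hx
  obtain ⟨i, hi, rfl⟩ := List.mem_iff_getElem.1 hp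
  have := hval.1 i hi
  rw [st, en, List.getD_eq_getElem _ _ hi] at this
  omega

lemma psum_le_st {n : ℕ} {l : List (ℕ × ℕ)} (hval : Valid n l) :
    ∀ j < l.length, psum (sizes l) j ≤ st l j := by
  intro j
  induction j with
  | zero => intro _; simp [psum]
  | succ j ih =>
    intro hj
    have h1 := ih (by omega)
    have h2 := psum_succ (h := sizes l) (j := j) (by simpa using (show j < l.length by omega))
    rw [getD_sizes (by omega)] at h2
    have h3 := (hval.1 j (by omega)).1
    have h4 := hval.2 j hj
    omega

lemma valid_packed {n : ℕ} {l : List (ℕ × ℕ)} (hval : Valid n l) :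
    Valid n (packed (sizes l)) := by
  have hlen : (packed (sizes l)).length = l.length := by simp
  constructor
  · intro i hi
    rw [hlen] at hi
    rw [st_packed (by simpa using hi), en_packed (by simpa using hi), getD_sizes hi]
    have h1 := (hval.1 i hi).1
    have h2 := (hval.1 i hi).2
    have h3 := psum_le_st hval i hi
    omega
  · intro i hi
    rw [hlen] at hi
    rw [st_packed (by simpa using hi), en_packed (by simpa using (show i < l.length by omega)),
      getD_sizes (by omega), psum_succ (by simpa using (show i < l.length by omega))]
    rw [getD_sizes (by omega)]
    have h1 := (hval.1 i (by omega)).1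
    omega

lemma leftmost_eq {n : ℕ} {h : List ℕ} (hpos : ∀ x ∈ h, 1 ≤ x) :
    leftmost n h = toSet n (packed h) := by
  ext v
  rw [leftmost, Finset.mem_filter, mem_toSet]
  simp only [Finset.mem_univ, true_and, length_packed]
  constructor
  · rintro ⟨j, hj, h1, h2⟩
    have hps : psum h j = (h.take j).sum + j := rfl
    refine ⟨j, hj, ?_, ?_⟩
    · rw [st_packed hj]; omega
    · rw [en_packed hj]; omega
  · rintro ⟨j, hj, h1, h2⟩
    rw [st_packed hj] at h1
    rw [en_packed hj] at h2
    have hps : psum h j = (h.take j).sum + j := rfl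
    have hd : 1 ≤ h.getD j 0 := by
      rw [List.getD_eq_getElem _ _ hj]
      exact hpos _ (List.getElem_mem _)
    exact ⟨j, hj, by omega, by omega⟩

lemma sizes_packed {h : List ℕ} (hpos : ∀ x ∈ h, 1 ≤ x) :
    sizes (packed h) = h := by
  apply List.ext_getElem
  · simp
  · intro i h1 h2
    have hi : i < h.length := by simpa using h2
    have hip : i < (packed h).length := by simpa using hi
    simp only [sizes, List.getElem_map]
    have hd : 1 ≤ h.getD i 0 := by
      rw [List.getD_eq_getElem _ _ hi]
      exact hpos _ (List.getElem_mem _)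
    have hs : (packed h)[i]'hip = (psum h i, psum h i + h.getD i 0 - 1) := by
      simp [packed]
    rw [hs]
    rw [List.getD_eq_getElem _ _ hi] at hd ⊢
    omega
end Stmt4
namespace Stmt4

lemma st_append {l l' : List (ℕ × ℕ)} {i : ℕ} (h : i < l.length) :
    st (l ++ l') i = st l i := by
  rw [st, st, List.getD_append _ _ _ _ h]

lemma en_append {l l' : List (ℕ × ℕ)} {i : ℕ} (h : i < l.length) :
    en (l ++ l') i = en l i := by
  rw [en, en, List.getD_append _ _ _ _ h]

lemma st_append_last {l : List (ℕ × ℕ)} {p : ℕ × ℕ} :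
    st (l ++ [p]) l.length = p.1 := by
  rw [st, List.getD_append_right _ _ _ _ le_rfl]
  simp

lemma en_append_last {l : List (ℕ × ℕ)} {p : ℕ × ℕ} :
    en (l ++ [p]) l.length = p.2 := by
  rw [en, List.getD_append_right _ _ _ _ le_rfl]
  simp

lemma exists_valid {n : ℕ} (A : Finset (Fin n)) : ∃ l, Valid n l ∧ toSet n l = A := by
  classical
  induction A using Finset.strongInduction with
  | _ A ih =>
    rcases Finset.eq_empty_or_nonempty A with rfl | hne
    · refine ⟨[], ⟨?_, ?_⟩, ?_⟩
      · intro i hi; simp at hi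
      · intro i hi; simp at hi
      · ext v; simp [mem_toSet]
    · set b : ℕ := (A.max' hne).val with hb
      have hbn : b < n := (A.max' hne).isLt
      have hQb : ival n b b ⊆ A := by
        intro v hv
        rw [mem_ival] at hv
        have : v = A.max' hne := Fin.ext (by omega)
        rw [this]; exact A.max'_mem hne
      have hex : ∃ a, ival n a b ⊆ A := ⟨b, hQb⟩
      set a : ℕ := Nat.find hex with ha
      have hQa : ival n a b ⊆ A := Nat.find_spec hex
      have hab : a ≤ b := Nat.find_min' hex hQb
      have hnotA : ∀ v ∈ A, v.val + 1 ≠ a := by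
        intro v hv hva
        have hQ : ival n (a - 1) b ⊆ A := by
          intro w hw
          rw [mem_ival] at hw
          rcases Nat.lt_or_ge w.val a with hc | hc
          · have : w = v := Fin.ext (by omega)
            rw [this]; exact hv
          · exact hQa (mem_ival.2 ⟨hc, hw.2⟩)
        have := Nat.find_min hex (show a - 1 < a by omega) hQ
        exact this
      set B : Finset (Fin n) := A \ ival n a b with hB
      have hBA : B ⊂ A := by
        refine Finset.ssubset_iff_of_subset (Finset.sdiff_subset) |>.2 ?_
        exact ⟨A.max' hne, A.max'_mem hne, by simp [hB, mem_ival, hab]; exact fun _ => ⟨hab, le_rfl⟩⟩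
      obtain ⟨l₀, hval₀, hset₀⟩ := ih B hBA
      have hBlt : ∀ v ∈ B, v.val + 2 ≤ a := by
        intro v hv
        rw [hB, Finset.mem_sdiff, mem_ival] at hv
        obtain ⟨hvA, hviv⟩ := hv
        have hvb : v.val ≤ b := Finset.le_max' A v hvA
        have hva : v.val < a := by omega
        have := hnotA v hvA
        omega
      refine ⟨l₀ ++ [(a, b)], ⟨?_, ?_⟩, ?_⟩
      · intro i hi
        simp only [List.length_append, List.length_singleton] at hi
        rcases Nat.lt_or_ge i l₀.length with hc | hc
        · rw [st_append hc, en_append hc]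
          exact hval₀.1 i hc
        · have : i = l₀.length := by omega
          subst this
          rw [st_append_last, en_append_last]
          exact ⟨hab, hbn⟩
      · intro i hi
        simp only [List.length_append, List.length_singleton] at hi
        rcases Nat.lt_or_ge (i + 1) l₀.length with hc | hc
        · rw [st_append hc, en_append (by omega)]
          exact hval₀.2 i hc
        · have : i + 1 = l₀.length := by omega
          rw [en_append (by omega), this, st_append_last]
          have hmem : (⟨en l₀ i, (hval₀.1 i (by omega)).2⟩ : Fin n) ∈ B := by
            rw [← hset₀]
            exact mem_toSet.2 ⟨i, by omega, by
              simp only [Fin.val_mk]; exact (hval₀.1 i (by omega)).1, by simp⟩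
          have := hBlt _ hmem
          simpa using this
      · ext v
        rw [mem_toSet]
        simp only [List.length_append, List.length_singleton]
        constructor
        · rintro ⟨i, hi, h1, h2⟩
          rcases Nat.lt_or_ge i l₀.length with hc | hc
          · rw [st_append hc] at h1
            rw [en_append hc] at h2
            have : v ∈ B := hset₀ ▸ mem_toSet.2 ⟨i, hc, h1, h2⟩
            exact (Finset.mem_sdiff.1 (hB ▸ this)).1
          · have : i = l₀.length := by omega
            subst this
            rw [st_append_last] at h1
            rw [en_append_last] at h2
            exact hQa (mem_ival.2 ⟨h1, h2⟩)
        · intro hv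
          by_cases hiv : v ∈ ival n a b
          · rw [mem_ival] at hiv
            exact ⟨l₀.length, by omega, by rw [st_append_last]; exact hiv.1,
              by rw [en_append_last]; exact hiv.2⟩
          · have hvB : v ∈ B := by rw [hB, Finset.mem_sdiff]; exact ⟨hv, hiv⟩
            obtain ⟨i, hi, h1, h2⟩ := mem_toSet.1 (hset₀ ▸ hvB : v ∈ toSet n l₀)
            exact ⟨i, by omega, by rw [st_append hi]; exact h1, by rw [en_append hi]; exact h2⟩

end Stmt4
namespace Stmt4

lemma st_set {l : List (ℕ × ℕ)} {p : ℕ × ℕ} {i j : ℕ} (hi : i < l.length) :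
    st (l.set j p) i = if j = i then p.1 else st l i := by
  rw [st, st, List.getD_eq_getElem _ _ (by simpa using hi), List.getD_eq_getElem _ _ hi,
    List.getElem_set]
  split <;> rfl

lemma en_set {l : List (ℕ × ℕ)} {p : ℕ × ℕ} {i j : ℕ} (hi : i < l.length) :
    en (l.set j p) i = if j = i then p.2 else en l i := by
  rw [en, en, List.getD_eq_getElem _ _ (by simpa using hi), List.getD_eq_getElem _ _ hi,
    List.getElem_set]
  split <;> rfl

/-- the measure: sum of the starts -/
def msum (l : List (ℕ × ℕ)) : ℕ := ∑ i ∈ Finset.range l.length, st l i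

section Move

variable {n : ℕ} {l : List (ℕ × ℕ)} {j : ℕ}

/-- the list after sliding component `j` one step to the left -/
def slide (l : List (ℕ × ℕ)) (j : ℕ) : List (ℕ × ℕ) :=
  l.set j (st l j - 1, en l j - 1)

lemma slide_length : (slide l j).length = l.length := by simp [slide]

lemma st_slide {i : ℕ} (hi : i < l.length) :
    st (slide l j) i = if j = i then st l j - 1 else st l i := by
  rw [slide, st_set hi]

lemma en_slide {i : ℕ} (hi : i < l.length) :
    en (slide l j) i = if j = i then en l j - 1 else en l i := by
  rw [slide, en_set hi]

variable (hval : Valid n l) (hj : j < l.length) (hpos : 0 < st l j)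
  (hgap : ∀ i, i + 1 = j → en l i + 3 ≤ st l j)

include hval hj hpos hgap

lemma valid_slide : Valid n (slide l j) := by
  constructor
  · intro i hi
    rw [slide_length] at hi
    rw [st_slide hi, en_slide hi]
    have h1 := hval.1 i hi
    have h2 := hval.1 j hj
    split <;> omega
  · intro i hi
    rw [slide_length] at hi
    rw [st_slide (by omega), en_slide (by omega)]
    have h0 := hval.2 i hi
    have h2 := hval.1 j hj
    rcases eq_or_ne j i with rfl | hji
    · rw [if_pos rfl, if_neg (by omega : ¬ j = j + 1)]
      omega
    · rcases eq_or_ne j (i + 1) with rfl | hji1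
      · rw [if_neg hji, if_pos rfl]
        have := hgap i rfl
        omega
      · rw [if_neg hji, if_neg hji1]
        exact h0

lemma sizes_slide : sizes (slide l j) = sizes l := by
  apply List.ext_getElem
  · simp [slide]
  · intro i h1 h2
    have hi : i < l.length := by simpa [slide] using h2
    simp only [sizes, List.getElem_map, slide, List.getElem_set]
    have h3 := hval.1 j hj
    have h4 : st l j = l[j].1 := by rw [st, List.getD_eq_getElem _ _ hj]
    have h5 : en l j = l[j].2 := by rw [en, List.getD_eq_getElem _ _ hj]
    have h6 := hpos
    split
    · next h => subst h; simp only []; omega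
    · rfl

lemma msum_slide : msum (slide l j) + 1 = msum l := by
  rw [msum, msum, slide_length]
  rw [← Finset.add_sum_erase _ _ (Finset.mem_range.2 hj),
    ← Finset.add_sum_erase _ _ (Finset.mem_range.2 hj)]
  have hsum : ∑ i ∈ (Finset.range l.length).erase j, st (slide l j) i
      = ∑ i ∈ (Finset.range l.length).erase j, st l i := by
    apply Finset.sum_congr rfl
    intro i hi
    rw [Finset.mem_erase, Finset.mem_range] at hi
    rw [st_slide hi.2, if_neg (Ne.symm hi.1)]
  rw [hsum, st_slide hj, if_pos rfl]
  omega

lemma comps_sdiff_slide :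
    comps (SimpleGraph.pathGraph n) (toSet n l) \
      comps (SimpleGraph.pathGraph n) (toSet n (slide l j)) = {ival n (st l j) (en l j)} ∧
    comps (SimpleGraph.pathGraph n) (toSet n (slide l j)) \
      comps (SimpleGraph.pathGraph n) (toSet n l) = {ival n (st l j - 1) (en l j - 1)} := by
  have hval' := valid_slide hval hj hpos hgap
  have hse := hval.1 j hj
  have hse' : st l j - 1 ≤ en l j - 1 ∧ en l j - 1 < n := by omega
  constructor
  · ext C
    rw [Finset.mem_sdiff, comps_toSet hval, comps_toSet hval', Finset.mem_singleton]
    constructor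
    · rintro ⟨⟨i, hi, rfl⟩, hnot⟩
      rcases eq_or_ne i j with rfl | hij
      · rfl
      · exfalso
        apply hnot
        refine ⟨i, by rwa [slide_length], ?_⟩
        rw [st_slide hi, en_slide hi, if_neg (Ne.symm hij), if_neg (Ne.symm hij)]
    · rintro rfl
      refine ⟨⟨j, hj, rfl⟩, ?_⟩
      rintro ⟨i, hi, heq⟩
      rw [slide_length] at hi
      rw [st_slide hi, en_slide hi] at heq
      rcases eq_or_ne j i with rfl | hij
      · rw [if_pos rfl, if_pos rfl] at heq
        have := (ival_inj hse.1 hse.2 hse'.1 hse'.2 heq).1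
        omega
      · rw [if_neg hij, if_neg hij] at heq
        have h1 := (ival_inj hse.1 hse.2 (hval.1 i hi).1 (hval.1 i hi).2 heq).1
        rcases Nat.lt_or_ge j i with hc | hc
        · have := valid_st_lt hval hc hi; omega
        · have := valid_st_lt hval (show i < j by omega) hj; omega
  · ext C
    rw [Finset.mem_sdiff, comps_toSet hval, comps_toSet hval', Finset.mem_singleton]
    constructor
    · rintro ⟨⟨i, hi, rfl⟩, hnot⟩
      rw [slide_length] at hi
      rw [st_slide hi, en_slide hi]
      rcases eq_or_ne j i with rfl | hij
      · rw [if_pos rfl, if_pos rfl]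
      · exfalso
        apply hnot
        rw [st_slide hi, en_slide hi, if_neg hij, if_neg hij]
        exact ⟨i, hi, rfl⟩
    · rintro rfl
      refine ⟨⟨j, by rwa [slide_length], ?_⟩, ?_⟩
      · rw [st_slide hj, en_slide hj, if_pos rfl, if_pos rfl]
      · rintro ⟨i, hi, heq⟩
        rcases eq_or_ne i j with rfl | hij
        · have := (ival_inj hse'.1 hse'.2 hse.1 hse.2 heq).1
          omega
        · have h1 := (ival_inj hse'.1 hse'.2 (hval.1 i hi).1 (hval.1 i hi).2 heq).1
          have h2 := hval.1 i hi
          rcases Nat.lt_or_ge j i with hc | hc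
          · have := valid_mono hval j i hc hi; omega
          · have := valid_mono hval i j (by omega) hj
            omega

lemma ccMultiset_slide :
    ccMultiset (SimpleGraph.pathGraph n) (toSet n l) =
      ccMultiset (SimpleGraph.pathGraph n) (toSet n (slide l j)) := by
  have hval' := valid_slide hval hj hpos hgap
  rw [ccMultiset_toSet hval, ccMultiset_toSet hval', slide_length]
  apply Multiset.map_congr rfl
  intro i hi
  rw [Multiset.mem_range] at hi
  rw [st_slide hi, en_slide hi]
  have h2 := hval.1 j hj
  have h1 := hpos
  rcases eq_or_ne j i with rfl | hji
  · rw [if_pos rfl, if_pos rfl]; omega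
  · rw [if_neg hji, if_neg hji]

lemma adjCS_slide :
    adjCS (SimpleGraph.pathGraph n) (toSet n l) (toSet n (slide l j)) := by
  obtain ⟨hd1, hd2⟩ := comps_sdiff_slide hval hj hpos hgap
  have hse := hval.1 j hj
  refine ⟨⟨ccMultiset_slide hval hj hpos hgap, ?_, ?_⟩, ?_⟩
  · rw [hd1]; exact Finset.card_singleton _
  · rw [hd2]; exact Finset.card_singleton _
  · intro C hC C' hC'
    rw [hd1, Finset.mem_singleton] at hC
    rw [hd2, Finset.mem_singleton] at hC'
    subst hC hC'
    have hunion : ival n (st l j) (en l j) ∪ ival n (st l j - 1) (en l j - 1)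
        = ival n (st l j - 1) (en l j) := by
      ext v
      simp only [Finset.mem_union, mem_ival]
      omega
    rw [hunion]
    exact isConnSub_ival (by omega) hse.2

end Move

end Stmt4
namespace Stmt4

lemma reconf_refl {V : Type*} [Fintype V] [DecidableEq V] {G : SimpleGraph V} {M : Multiset ℕ}
    {R : Finset V → Finset V → Prop} {A : Finset V} (hA : ccMultiset G A = M) :
    Reconf G M R A A :=
  ⟨0, fun _ => A, rfl, rfl, fun _ _ => hA, fun i hi => absurd hi (by omega)⟩

lemma reconf_head {V : Type*} [Fintype V] [DecidableEq V] {G : SimpleGraph V} {M : Multiset ℕ}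
    {R : Finset V → Finset V → Prop} {A B C : Finset V} (hR : R A B)
    (hA : ccMultiset G A = M) (h : Reconf G M R B C) : Reconf G M R A C := by
  obtain ⟨ℓ, W, h0, hl, hcc, hadj⟩ := h
  refine ⟨ℓ + 1, fun i => if i = 0 then A else W (i - 1), by simp, by simp [hl], ?_, ?_⟩
  · intro i hi
    rcases Nat.eq_zero_or_pos i with rfl | hpos
    · simpa using hA
    · show ccMultiset G (if i = 0 then A else W (i - 1)) = M
      rw [if_neg (by omega)]
      exact hcc (i - 1) (by omega)
  · intro i hi
    rcases Nat.eq_zero_or_pos i with rfl | hpos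
    · simpa [h0] using hR
    · show R (if i = 0 then A else W (i - 1)) (if i + 1 = 0 then A else W (i + 1 - 1))
      rw [if_neg (by omega : ¬ i = 0), if_neg (by omega : ¬ i + 1 = 0)]
      have h1 : i - 1 + 1 = i := by omega
      have h2 : i + 1 - 1 = i - 1 + 1 := by omega
      rw [h2, ← h1]
      exact hadj (i - 1) (by omega)

lemma reconf_to_packed {n : ℕ} : ∀ (N : ℕ) (l : List (ℕ × ℕ)), Valid n l → msum l ≤ N →
    Reconf (SimpleGraph.pathGraph n) (ccMultiset (SimpleGraph.pathGraph n) (toSet n l))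
      (adjCS (SimpleGraph.pathGraph n)) (toSet n l) (toSet n (packed (sizes l))) := by
  intro N
  induction N with
  | zero =>
    intro l hval hm
    by_cases hp : ∀ j < l.length, st l j = psum (sizes l) j
    · have : l = packed (sizes l) := by
        apply List.ext_getElem
        · simp
        · intro i h1 h2
          have hi : i < l.length := h1
          have hst : st l i = l[i].1 := by rw [st, List.getD_eq_getElem _ _ hi]
          have hen : en l i = l[i].2 := by rw [en, List.getD_eq_getElem _ _ hi]
          have hp1 := hp i hi
          have hsz := getD_sizes (l := l) hi
          have hse := hval.1 i hi
          have : (packed (sizes l))[i] =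
              (psum (sizes l) i, psum (sizes l) i + (sizes l).getD i 0 - 1) := by
            simp [packed]
          rw [this]
          refine Prod.ext ?_ ?_ <;> simp only [] <;> omega
      rw [← this]
      exact reconf_refl rfl
    · exfalso
      push_neg at hp
      obtain ⟨j, hj, hne⟩ := hp
      have hge := psum_le_st hval j hj
      have h1 : 1 ≤ st l j := by have : 0 ≤ psum (sizes l) j := Nat.zero_le _; omega
      have : st l j ≤ msum l := by
        rw [msum]
        exact Finset.single_le_sum (fun i _ => Nat.zero_le _) (Finset.mem_range.2 hj)
      omega
  | succ N ihN =>
    intro l hval hm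
    by_cases hp : ∀ j < l.length, st l j = psum (sizes l) j
    · have : l = packed (sizes l) := by
        apply List.ext_getElem
        · simp
        · intro i h1 h2
          have hi : i < l.length := h1
          have hst : st l i = l[i].1 := by rw [st, List.getD_eq_getElem _ _ hi]
          have hen : en l i = l[i].2 := by rw [en, List.getD_eq_getElem _ _ hi]
          have hp1 := hp i hi
          have hsz := getD_sizes (l := l) hi
          have hse := hval.1 i hi
          have : (packed (sizes l))[i] =
              (psum (sizes l) i, psum (sizes l) i + (sizes l).getD i 0 - 1) := by
            simp [packed]
          rw [this]
          refine Prod.ext ?_ ?_ <;> simp only [] <;> omega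
      rw [← this]
      exact reconf_refl rfl
    · push_neg at hp
      have hex : ∃ j, j < l.length ∧ st l j ≠ psum (sizes l) j := by
        obtain ⟨j, hj, hne⟩ := hp; exact ⟨j, hj, hne⟩
      classical
      obtain ⟨j, ⟨hj, hne⟩, hmin⟩ : ∃ j, (j < l.length ∧ st l j ≠ psum (sizes l) j) ∧
          ∀ i < j, ¬(i < l.length ∧ st l i ≠ psum (sizes l) i) :=
        ⟨Nat.find hex, Nat.find_spec hex, fun i hi => Nat.find_min hex hi⟩
      have hprev : ∀ i < j, st l i = psum (sizes l) i := by
        intro i hij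
        have := hmin i hij
        push_neg at this
        exact this (by omega)
      have hgt : psum (sizes l) j < st l j := lt_of_le_of_ne (psum_le_st hval j hj) (Ne.symm hne)
      have hpos : 0 < st l j := by omega
      have hgap : ∀ i, i + 1 = j → en l i + 3 ≤ st l j := by
        intro i hij
        have hilen : i < l.length := by omega
        have h1 := hprev i (by omega)
        have h2 : psum (sizes l) (i + 1) = psum (sizes l) i + (sizes l).getD i 0 + 1 :=
          psum_succ (by simpa using hilen)
        have h3 := getD_sizes (l := l) hilen
        have h4 := (hval.1 i hilen).1
        rw [hij] at h2
        omega
      have hval' := valid_slide hval hj hpos hgap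
      have hsz := sizes_slide hval hj hpos hgap
      have hcc := ccMultiset_slide hval hj hpos hgap
      have hmsum := msum_slide (n := n) hval hj hpos hgap
      have hadj := adjCS_slide hval hj hpos hgap
      refine reconf_head hadj rfl ?_
      have := ihN (slide l j) hval' (by omega)
      rw [hsz] at this
      rw [← hcc] at this
      exact this

theorem stmt4' (n k : ℕ) (A : Finset (Fin n))
    (hk : (comps (SimpleGraph.pathGraph n) A).card = k) :
    hseq n (leftmost n (hseq n A)) = hseq n A ∧
    Reconf (SimpleGraph.pathGraph n) (ccMultiset (SimpleGraph.pathGraph n) A)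
      (adjCS (SimpleGraph.pathGraph n)) A (leftmost n (hseq n A)) := by
  obtain ⟨l, hval, rfl⟩ := exists_valid A
  have hseqA : hseq n (toSet n l) = sizes l := by
    rw [hseq_toSet hval, sizes_range_map]
  have hpos := sizes_pos hval
  have hlm : leftmost n (hseq n (toSet n l)) = toSet n (packed (sizes l)) := by
    rw [hseqA, leftmost_eq hpos]
  constructor
  · rw [hlm, hseq_toSet (valid_packed hval), sizes_range_map, sizes_packed hpos, hseqA]
  · rw [hlm]
    exact reconf_to_packed (msum l) l hval le_rfl

end Stmt4

/-- On a path graph, any subset `A` with `k` connected components is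
reconfigurable under CS to the left-most subset `L` with `h_L = h_A`. -/
theorem stmt4 (n k : ℕ) (A : Finset (Fin n))
    (hk : (comps (SimpleGraph.pathGraph n) A).card = k) :
    hseq n (leftmost n (hseq n A)) = hseq n A ∧
    Reconf (SimpleGraph.pathGraph n) (ccMultiset (SimpleGraph.pathGraph n) A)
      (adjCS (SimpleGraph.pathGraph n)) A (leftmost n (hseq n A)) :=
  Stmt4.stmt4' n k A hk
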